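/- Let n ≥ 1 and let p, q ∈ ℂ[x_1, x_2] be (nonhomogeneous) polynomials of degree ≤ n in two variables. Then there exist symmetric complex matrices β^{10}, β^{20}, β^{12}, with rows and columns indexed by pairs (i_1,i_2) ∈ ℕ² with i_1 + i_2 ≤ n−1 (of size n(n+1)/2), such that p(x_1,x_2)q(y_1,y_2) − q(x_1,x_2)p(y_1,y_2) = Σ_{i,j} x_1^{i_1} x_2^{i_2} y_1^{j_1} y_2^{j_2} ( β^{10}_{ij} (x_1 − y_1) + β^{20}_{ij} (x_2 − y_2) + β^{12}_{ij} (x_1 y_2 − x_2 y_1) ) holds for all (x_1,x_2), (y_1,y_2) ∈ ℂ², where the sum runs over all pairs i = (i_1,i_2), j = (j_1,j_2) with i_1 + i_2 ≤ n−1 and j_1 + j_2 ≤ n−1. -/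
import Mathlib


/-- Pairs `(i₁,i₂) ∈ ℕ²` with `i₁ + i₂ ≤ n − 1` (i.e. `i₁ + i₂ < n`). -/
abbrev PairIdx (n : ℕ) : Type := {i : ℕ × ℕ // i.1 + i.2 < n}

noncomputable instance (n : ℕ) : Fintype (PairIdx n) :=
  Fintype.ofInjective
    (fun i : PairIdx n =>
      ((⟨i.1.1, by have := i.2; omega⟩ : Fin n), (⟨i.1.2, by have := i.2; omega⟩ : Fin n)))
    (by
      rintro ⟨⟨a1, a2⟩, ha⟩ ⟨⟨b1, b2⟩, hb⟩ hEq
      simp only [Prod.mk.injEq, Fin.mk.injEq] at hEq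
      exact Subtype.ext (by simp [hEq.1, hEq.2]))

namespace BezoutAux

noncomputable section

abbrev V : Type := ℂ → ℂ → ℂ → ℂ → ℂ

def gen : Fin 3 → V
  | ⟨0, _⟩ => fun x₁ _ y₁ _ => x₁ - y₁
  | ⟨1, _⟩ => fun _ x₂ _ y₂ => x₂ - y₂
  | ⟨2, _⟩ => fun x₁ x₂ y₁ y₂ => x₁ * y₂ - x₂ * y₁

@[simp] lemma gen_zero : gen 0 = fun x₁ _ y₁ _ => x₁ - y₁ := rfl
@[simp] lemma gen_one : gen 1 = fun _ x₂ _ y₂ => x₂ - y₂ := rfl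
@[simp] lemma gen_two : gen 2 = fun x₁ x₂ y₁ y₂ => x₁ * y₂ - x₂ * y₁ := rfl

def v (n : ℕ) (w : PairIdx n × PairIdx n × Fin 3) : V :=
  fun x₁ x₂ y₁ y₂ =>
    x₁ ^ w.1.1.1 * x₂ ^ w.1.1.2 * y₁ ^ w.2.1.1.1 * y₂ ^ w.2.1.1.2 * gen w.2.2 x₁ x₂ y₁ y₂

def Sp (n : ℕ) : Submodule ℂ V := Submodule.span ℂ (Set.range (v n))

lemma gen_mem (n : ℕ) (i j : PairIdx n) (t : Fin 3) : v n (i, j, t) ∈ Sp n :=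
  Submodule.subset_span ⟨(i, j, t), rfl⟩

def mk (a₁ a₂ b₁ b₂ : ℕ) : V := fun x₁ x₂ y₁ y₂ => x₁ ^ a₁ * x₂ ^ a₂ * y₁ ^ b₁ * y₂ ^ b₂

set_option maxHeartbeats 1000000 in
lemma core (n : ℕ) : ∀ (d a₁ a₂ b₁ b₂ c₁ c₂ e₁ e₂ : ℕ),
    a₁ + a₂ ≤ n → b₁ + b₂ ≤ n → c₁ + c₂ ≤ n → e₁ + e₂ ≤ n →
    a₁ + b₁ = c₁ + e₁ → a₂ + b₂ = c₂ + e₂ →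
    (a₁ - c₁) + (c₁ - a₁) + (a₂ - c₂) + (c₂ - a₂)
      + ((n - a₁ - a₂) - (n - c₁ - c₂)) + ((n - c₁ - c₂) - (n - a₁ - a₂)) ≤ d →
    mk a₁ a₂ b₁ b₂ - mk c₁ c₂ e₁ e₂ ∈ Sp n := by
  intro d
  induction d with
  | zero =>
    intro a₁ a₂ b₁ b₂ c₁ c₂ e₁ e₂ ha hb hc he h1 h2 hdist
    obtain ⟨rfl, rfl, rfl, rfl⟩ : a₁ = c₁ ∧ a₂ = c₂ ∧ b₁ = e₁ ∧ b₂ = e₂ := by omega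
    simp [Sp]
  | succ d ih =>
    intro a₁ a₂ b₁ b₂ c₁ c₂ e₁ e₂ ha hb hc he h1 h2 hdist
    by_cases heq : a₁ = c₁ ∧ a₂ = c₂
    · obtain ⟨rfl, rfl, rfl, rfl⟩ : a₁ = c₁ ∧ a₂ = c₂ ∧ b₁ = e₁ ∧ b₂ = e₂ := by omega
      simp [Sp]
    rcases Nat.lt_trichotomy a₁ c₁ with h1c | h1c | h1c
    · -- a₁ < c₁
      have hb₁ : 1 ≤ b₁ := by omega
      obtain ⟨B, rfl⟩ : ∃ B, b₁ = B + 1 := ⟨b₁ - 1, by omega⟩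
      rcases Nat.lt_or_ge c₂ a₂ with h2c | h2c
      · -- a₂ > c₂ : move (2,1), negative gen2
        obtain ⟨A, rfl⟩ : ∃ A, a₂ = A + 1 := ⟨a₂ - 1, by omega⟩
        have hbr : mk a₁ (A + 1) (B + 1) b₂ - mk (a₁ + 1) A B (b₂ + 1)
            = -(v n (⟨(a₁, A), by omega⟩, ⟨(B, b₂), by omega⟩, 2)) := by
          funext x₁ x₂ y₁ y₂
          simp only [mk, v, gen_two, Pi.neg_apply, Pi.sub_apply]
          ring
        have hm1 : mk a₁ (A + 1) (B + 1) b₂ - mk (a₁ + 1) A B (b₂ + 1) ∈ Sp n := by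
          rw [hbr]; exact neg_mem (gen_mem n _ _ _)
        have hm2 : mk (a₁ + 1) A B (b₂ + 1) - mk c₁ c₂ e₁ e₂ ∈ Sp n :=
          ih (a₁ + 1) A B (b₂ + 1) c₁ c₂ e₁ e₂ (by omega) (by omega) hc he
            (by omega) (by omega) (by omega)
        have := (Sp n).add_mem hm1 hm2
        rwa [sub_add_sub_cancel] at this
      · -- a₂ ≤ c₂ : move (0,1), negative gen0 ; need n - a₁ - a₂ ≥ 1
        have hbr : mk a₁ a₂ (B + 1) b₂ - mk (a₁ + 1) a₂ B b₂
            = -(v n (⟨(a₁, a₂), by omega⟩, ⟨(B, b₂), by omega⟩, 0)) := by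
          funext x₁ x₂ y₁ y₂
          simp only [mk, v, gen_zero, Pi.neg_apply, Pi.sub_apply]
          ring
        have hm1 : mk a₁ a₂ (B + 1) b₂ - mk (a₁ + 1) a₂ B b₂ ∈ Sp n := by
          rw [hbr]; exact neg_mem (gen_mem n _ _ _)
        have hm2 : mk (a₁ + 1) a₂ B b₂ - mk c₁ c₂ e₁ e₂ ∈ Sp n :=
          ih (a₁ + 1) a₂ B b₂ c₁ c₂ e₁ e₂ (by omega) (by omega) hc he
            (by omega) (by omega) (by omega)
        have := (Sp n).add_mem hm1 hm2
        rwa [sub_add_sub_cancel] at this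
    · -- a₁ = c₁, so a₂ ≠ c₂
      rcases Nat.lt_trichotomy a₂ c₂ with h2c | h2c | h2c
      · -- a₂ < c₂ : move (0,2), negative gen1
        have hb₂ : 1 ≤ b₂ := by omega
        obtain ⟨B, rfl⟩ : ∃ B, b₂ = B + 1 := ⟨b₂ - 1, by omega⟩
        have hbr : mk a₁ a₂ b₁ (B + 1) - mk a₁ (a₂ + 1) b₁ B
            = -(v n (⟨(a₁, a₂), by omega⟩, ⟨(b₁, B), by omega⟩, 1)) := by
          funext x₁ x₂ y₁ y₂
          simp only [mk, v, gen_one, Pi.neg_apply, Pi.sub_apply]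
          ring
        have hm1 : mk a₁ a₂ b₁ (B + 1) - mk a₁ (a₂ + 1) b₁ B ∈ Sp n := by
          rw [hbr]; exact neg_mem (gen_mem n _ _ _)
        have hm2 : mk a₁ (a₂ + 1) b₁ B - mk c₁ c₂ e₁ e₂ ∈ Sp n :=
          ih a₁ (a₂ + 1) b₁ B c₁ c₂ e₁ e₂ (by omega) (by omega) hc he
            (by omega) (by omega) (by omega)
        have := (Sp n).add_mem hm1 hm2
        rwa [sub_add_sub_cancel] at this
      · omega
      · -- a₂ > c₂ : move (2,0), positive gen1
        obtain ⟨A, rfl⟩ : ∃ A, a₂ = A + 1 := ⟨a₂ - 1, by omega⟩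
        have hbr : mk a₁ (A + 1) b₁ b₂ - mk a₁ A b₁ (b₂ + 1)
            = v n (⟨(a₁, A), by omega⟩, ⟨(b₁, b₂), by omega⟩, 1) := by
          funext x₁ x₂ y₁ y₂
          simp only [mk, v, gen_one, Pi.sub_apply]
          ring
        have hm1 : mk a₁ (A + 1) b₁ b₂ - mk a₁ A b₁ (b₂ + 1) ∈ Sp n := by
          rw [hbr]; exact gen_mem n _ _ _
        have hm2 : mk a₁ A b₁ (b₂ + 1) - mk c₁ c₂ e₁ e₂ ∈ Sp n :=
          ih a₁ A b₁ (b₂ + 1) c₁ c₂ e₁ e₂ (by omega) (by omega) hc he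
            (by omega) (by omega) (by omega)
        have := (Sp n).add_mem hm1 hm2
        rwa [sub_add_sub_cancel] at this
    · -- a₁ > c₁
      obtain ⟨A, rfl⟩ : ∃ A, a₁ = A + 1 := ⟨a₁ - 1, by omega⟩
      rcases Nat.lt_or_ge a₂ c₂ with h2c | h2c
      · -- a₂ < c₂ : move (1,2), positive gen2
        have hb₂ : 1 ≤ b₂ := by omega
        obtain ⟨B, rfl⟩ : ∃ B, b₂ = B + 1 := ⟨b₂ - 1, by omega⟩
        have hbr : mk (A + 1) a₂ b₁ (B + 1) - mk A (a₂ + 1) (b₁ + 1) B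
            = v n (⟨(A, a₂), by omega⟩, ⟨(b₁, B), by omega⟩, 2) := by
          funext x₁ x₂ y₁ y₂
          simp only [mk, v, gen_two, Pi.sub_apply]
          ring
        have hm1 : mk (A + 1) a₂ b₁ (B + 1) - mk A (a₂ + 1) (b₁ + 1) B ∈ Sp n := by
          rw [hbr]; exact gen_mem n _ _ _
        have hm2 : mk A (a₂ + 1) (b₁ + 1) B - mk c₁ c₂ e₁ e₂ ∈ Sp n :=
          ih A (a₂ + 1) (b₁ + 1) B c₁ c₂ e₁ e₂ (by omega) (by omega) hc he
            (by omega) (by omega) (by omega)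
        have := (Sp n).add_mem hm1 hm2
        rwa [sub_add_sub_cancel] at this
      · -- a₂ ≥ c₂ : move (1,0), positive gen0; need b₁+b₂ < n
        have hbr : mk (A + 1) a₂ b₁ b₂ - mk A a₂ (b₁ + 1) b₂
            = v n (⟨(A, a₂), by omega⟩, ⟨(b₁, b₂), by omega⟩, 0) := by
          funext x₁ x₂ y₁ y₂
          simp only [mk, v, gen_zero, Pi.sub_apply]
          ring
        have hm1 : mk (A + 1) a₂ b₁ b₂ - mk A a₂ (b₁ + 1) b₂ ∈ Sp n := by
          rw [hbr]; exact gen_mem n _ _ _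
        have hm2 : mk A a₂ (b₁ + 1) b₂ - mk c₁ c₂ e₁ e₂ ∈ Sp n :=
          ih A a₂ (b₁ + 1) b₂ c₁ c₂ e₁ e₂ (by omega) (by omega) hc he
            (by omega) (by omega) (by omega)
        have := (Sp n).add_mem hm1 hm2
        rwa [sub_add_sub_cancel] at this


open MvPolynomial in
lemma supp_deg_le {n : ℕ} {p : MvPolynomial (Fin 2) ℂ} (hp : p.totalDegree ≤ n)
    {α : Fin 2 →₀ ℕ} (hα : α ∈ p.support) : α 0 + α 1 ≤ n := by
  have h1 := MvPolynomial.le_totalDegree hα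
  have h2 : α.sum (fun _ e => e) = α 0 + α 1 := by
    rw [Finsupp.sum_fintype _ _ (fun _ => rfl), Fin.sum_univ_two]
  omega

open MvPolynomial in
lemma F_mem (n : ℕ) (p q : MvPolynomial (Fin 2) ℂ)
    (hp : p.totalDegree ≤ n) (hq : q.totalDegree ≤ n) :
    (fun x₁ x₂ y₁ y₂ => eval ![x₁, x₂] p * eval ![y₁, y₂] q
      - eval ![x₁, x₂] q * eval ![y₁, y₂] p : V) ∈ Sp n := by
  have hrep : (fun x₁ x₂ y₁ y₂ => eval ![x₁, x₂] p * eval ![y₁, y₂] q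
      - eval ![x₁, x₂] q * eval ![y₁, y₂] p : V)
      = ∑ α ∈ p.support, ∑ β ∈ q.support, (coeff α p * coeff β q) •
          (mk (α 0) (α 1) (β 0) (β 1) - mk (β 0) (β 1) (α 0) (α 1)) := by
    funext x₁ x₂ y₁ y₂
    simp only [Finset.sum_apply, Pi.smul_apply, Pi.sub_apply, smul_eq_mul, mk,
      eval_eq', Fin.prod_univ_two, Matrix.cons_val_zero, Matrix.cons_val_one, Matrix.head_cons]
    rw [Finset.sum_mul_sum, Finset.sum_mul_sum, Finset.sum_comm (s := q.support)]
    rw [← Finset.sum_sub_distrib]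
    refine Finset.sum_congr rfl fun α _ => ?_
    rw [← Finset.sum_sub_distrib]
    exact Finset.sum_congr rfl fun β _ => by ring
  rw [hrep]
  refine Submodule.sum_mem _ fun α hα => Submodule.sum_mem _ fun β hβ =>
    Submodule.smul_mem _ _ ?_
  exact core n _ (α 0) (α 1) (β 0) (β 1) (β 0) (β 1) (α 0) (α 1)
    (supp_deg_le hp hα) (supp_deg_le hq hβ) (supp_deg_le hq hβ) (supp_deg_le hp hα)
    (by omega) (by omega) le_rfl

end
end BezoutAux

/-- For `p, q ∈ ℂ[x₁,x₂]` of degree ≤ n (`n ≥ 1`) there exist symmetric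
matrices `β¹⁰, β²⁰, β¹²`, indexed by pairs `(i₁,i₂)` with `i₁+i₂ ≤ n−1`, such that
`p(x₁,x₂)q(y₁,y₂) − q(x₁,x₂)p(y₁,y₂) = Σ_{i,j} x₁^{i₁} x₂^{i₂} y₁^{j₁} y₂^{j₂}
(β¹⁰_{ij}(x₁−y₁) + β²⁰_{ij}(x₂−y₂) + β¹²_{ij}(x₁y₂−x₂y₁))` for all `x, y ∈ ℂ²`. -/
theorem exists_bezout_decomposition_affine
    (n : ℕ) (hn : 1 ≤ n) (p q : MvPolynomial (Fin 2) ℂ)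
    (hp : p.totalDegree ≤ n) (hq : q.totalDegree ≤ n) :
    ∃ β10 β20 β12 : PairIdx n → PairIdx n → ℂ,
      (∀ i j, β10 i j = β10 j i) ∧ (∀ i j, β20 i j = β20 j i) ∧ (∀ i j, β12 i j = β12 j i) ∧
      ∀ x₁ x₂ y₁ y₂ : ℂ,
        MvPolynomial.eval ![x₁, x₂] p * MvPolynomial.eval ![y₁, y₂] q -
            MvPolynomial.eval ![x₁, x₂] q * MvPolynomial.eval ![y₁, y₂] p =
          ∑ i : PairIdx n, ∑ j : PairIdx n,
            x₁ ^ i.1.1 * x₂ ^ i.1.2 * y₁ ^ j.1.1 * y₂ ^ j.1.2 *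
              (β10 i j * (x₁ - y₁) + β20 i j * (x₂ - y₂) + β12 i j * (x₁ * y₂ - x₂ * y₁)) := by
  classical
  have hF := BezoutAux.F_mem n p q hp hq
  rw [BezoutAux.Sp, Submodule.mem_span_range_iff_exists_fun] at hF
  obtain ⟨c, hc⟩ := hF
  have hS : ∀ u₁ u₂ w₁ w₂ : ℂ,
      (∑ i : PairIdx n, ∑ j : PairIdx n,
        u₁ ^ i.1.1 * u₂ ^ i.1.2 * w₁ ^ j.1.1 * w₂ ^ j.1.2 *
          (c (i, j, 0) * (u₁ - w₁) + c (i, j, 1) * (u₂ - w₂)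
            + c (i, j, 2) * (u₁ * w₂ - u₂ * w₁)))
      = MvPolynomial.eval ![u₁, u₂] p * MvPolynomial.eval ![w₁, w₂] q -
          MvPolynomial.eval ![u₁, u₂] q * MvPolynomial.eval ![w₁, w₂] p := by
    intro u₁ u₂ w₁ w₂
    have h := congrFun (congrFun (congrFun (congrFun hc u₁) u₂) w₁) w₂
    rw [← h]
    simp only [Finset.sum_apply, Pi.smul_apply, smul_eq_mul, Fintype.sum_prod_type]
    refine Finset.sum_congr rfl fun i _ => Finset.sum_congr rfl fun j _ => ?_
    rw [Fin.sum_univ_three]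
    simp only [BezoutAux.v, BezoutAux.gen_zero, BezoutAux.gen_one, BezoutAux.gen_two]
    ring
  refine ⟨fun i j => (c (i, j, 0) + c (j, i, 0)) / 2,
         fun i j => (c (i, j, 1) + c (j, i, 1)) / 2,
         fun i j => (c (i, j, 2) + c (j, i, 2)) / 2,
         fun i j => by ring, fun i j => by ring, fun i j => by ring, ?_⟩
  intro x₁ x₂ y₁ y₂
  show MvPolynomial.eval ![x₁, x₂] p * MvPolynomial.eval ![y₁, y₂] q -
            MvPolynomial.eval ![x₁, x₂] q * MvPolynomial.eval ![y₁, y₂] p =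
          ∑ i : PairIdx n, ∑ j : PairIdx n,
            x₁ ^ i.1.1 * x₂ ^ i.1.2 * y₁ ^ j.1.1 * y₂ ^ j.1.2 *
              ((c (i, j, 0) + c (j, i, 0)) / 2 * (x₁ - y₁)
                + (c (i, j, 1) + c (j, i, 1)) / 2 * (x₂ - y₂)
                + (c (i, j, 2) + c (j, i, 2)) / 2 * (x₁ * y₂ - x₂ * y₁))
  have hsplit : (∑ i : PairIdx n, ∑ j : PairIdx n,
      x₁ ^ i.1.1 * x₂ ^ i.1.2 * y₁ ^ j.1.1 * y₂ ^ j.1.2 *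
        ((c (i, j, 0) + c (j, i, 0)) / 2 * (x₁ - y₁)
          + (c (i, j, 1) + c (j, i, 1)) / 2 * (x₂ - y₂)
          + (c (i, j, 2) + c (j, i, 2)) / 2 * (x₁ * y₂ - x₂ * y₁)))
      = (∑ i : PairIdx n, ∑ j : PairIdx n,
          x₁ ^ i.1.1 * x₂ ^ i.1.2 * y₁ ^ j.1.1 * y₂ ^ j.1.2 *
            (c (i, j, 0) * (x₁ - y₁) + c (i, j, 1) * (x₂ - y₂)
              + c (i, j, 2) * (x₁ * y₂ - x₂ * y₁))) / 2
        - (∑ i : PairIdx n, ∑ j : PairIdx n,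
          y₁ ^ j.1.1 * y₂ ^ j.1.2 * x₁ ^ i.1.1 * x₂ ^ i.1.2 *
            (c (j, i, 0) * (y₁ - x₁) + c (j, i, 1) * (y₂ - x₂)
              + c (j, i, 2) * (y₁ * x₂ - y₂ * x₁))) / 2 := by
    rw [Finset.sum_div, Finset.sum_div, ← Finset.sum_sub_distrib]
    refine Finset.sum_congr rfl fun i _ => ?_
    rw [Finset.sum_div, Finset.sum_div, ← Finset.sum_sub_distrib]
    exact Finset.sum_congr rfl fun j _ => by ring
  have hswap : (∑ i : PairIdx n, ∑ j : PairIdx n,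
      y₁ ^ j.1.1 * y₂ ^ j.1.2 * x₁ ^ i.1.1 * x₂ ^ i.1.2 *
        (c (j, i, 0) * (y₁ - x₁) + c (j, i, 1) * (y₂ - x₂)
          + c (j, i, 2) * (y₁ * x₂ - y₂ * x₁)))
      = ∑ i : PairIdx n, ∑ j : PairIdx n,
        y₁ ^ i.1.1 * y₂ ^ i.1.2 * x₁ ^ j.1.1 * x₂ ^ j.1.2 *
          (c (i, j, 0) * (y₁ - x₁) + c (i, j, 1) * (y₂ - x₂)
            + c (i, j, 2) * (y₁ * x₂ - y₂ * x₁)) := Finset.sum_comm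
  rw [hsplit, hswap, hS x₁ x₂ y₁ y₂, hS y₁ y₂ x₁ x₂]
  ring
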